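/- Let H be a finite simple graph and let S be a clique ordering of H. Let S' be the clique ordering obtained from S by replacing every maximal run of equal consecutive cliques by a single copy of that clique (i.e., eliminating all consecutive duplicates). Then S is equivalent to S'. -/

import Mathlib

variable {V : Type*}

/-- `Q` is a maximal clique of the simple graph `G`. -/
def IsMaxClique (G : SimpleGraph V) (Q : Finset V) : Prop :=
  G.IsClique (Q : Set V) ∧
    ∀ R : Finset V, G.IsClique (R : Set V) → Q ⊆ R → Q = R

/-- `S` is a clique ordering of `G`: a finite sequence of (possibly empty) cliques
containing every maximal clique, in which the indices of cliques containing any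
fixed vertex are consecutive. -/
def IsCliqueOrdering (G : SimpleGraph V) (S : List (Finset V)) : Prop :=
  (∀ Q ∈ S, G.IsClique (Q : Set V)) ∧
  (∀ Q : Finset V, IsMaxClique G Q → Q ∈ S) ∧
  (∀ v : V, ∀ i j k : ℕ, i ≤ j → j ≤ k → k < S.length →
    v ∈ S.getD i ∅ → v ∈ S.getD k ∅ → v ∈ S.getD j ∅)

/-- `S'` is obtained from `S` by inserting a clique `Q'` of `G` between
positions `i` and `i+1` (with the out-of-range cliques taken to be empty),
where `Q'` contains the intersection of its two neighbours and is contained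
in one of them. -/
def SubcliqueInsertion [DecidableEq V] (G : SimpleGraph V)
    (S S' : List (Finset V)) : Prop :=
  ∃ (i : ℕ) (Q' : Finset V), i ≤ S.length ∧ G.IsClique (Q' : Set V) ∧
    S' = S.take i ++ Q' :: S.drop i ∧
    (if i = 0 then (∅ : Finset V) else S.getD (i - 1) ∅) ∩ S.getD i ∅ ⊆ Q' ∧
    (Q' ⊆ (if i = 0 then (∅ : Finset V) else S.getD (i - 1) ∅) ∨ Q' ⊆ S.getD i ∅)

/-- `S'` is an extension of `S`: it is obtained from `S` by a finite sequence of
subclique insertions. -/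
def IsExtension [DecidableEq V] (G : SimpleGraph V) (S S' : List (Finset V)) : Prop :=
  Relation.ReflTransGen (SubcliqueInsertion G) S S'

/-- Two clique orderings are compatible if they both (separately) extend to a
common ordering. -/
def Compatible [DecidableEq V] (G : SimpleGraph V) (S1 S2 : List (Finset V)) : Prop :=
  ∃ T : List (Finset V), IsExtension G S1 T ∧ IsExtension G S2 T

/-- `B` is obtained from `A` by duplicating one entry. -/
def Dup (A B : List (Finset V)) : Prop :=
  ∃ (L : List (Finset V)) (x : Finset V) (R : List (Finset V)),
    A = L ++ x :: R ∧ B = L ++ x :: x :: R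

lemma getD_mid (L : List (Finset V)) (x : Finset V) (R : List (Finset V)) :
    (L ++ x :: R).getD L.length ∅ = x := by
  rw [List.getD_append_right _ _ _ _ le_rfl]; simp

lemma getD_dup_le {L R : List (Finset V)} (x : Finset V) {j : ℕ} (hj : j ≤ L.length) :
    (L ++ x :: x :: R).getD j ∅ = (L ++ x :: R).getD j ∅ := by
  rcases lt_or_eq_of_le hj with h | h
  · rw [List.getD_append _ _ _ _ h, List.getD_append _ _ _ _ h]
  · subst h
    rw [getD_mid, getD_mid]

lemma getD_dup_shift {L R : List (Finset V)} (x : Finset V) {j : ℕ} (hj : L.length ≤ j) :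
    (L ++ x :: x :: R).getD (j + 1) ∅ = (L ++ x :: R).getD j ∅ := by
  obtain ⟨m, rfl⟩ : ∃ m, j = L.length + m := ⟨j - L.length, by omega⟩
  rw [List.getD_append_right _ _ _ _ (by omega), List.getD_append_right _ _ _ _ (by omega)]
  have h1 : L.length + m + 1 - L.length = m + 1 := by omega
  have h2 : L.length + m - L.length = m := by omega
  rw [h1, h2]
  rfl

lemma Dup.insertion [DecidableEq V] {G : SimpleGraph V} {A B : List (Finset V)}
    (hA : ∀ Q ∈ A, G.IsClique (Q : Set V)) (h : Dup A B) :
    SubcliqueInsertion G A B := by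
  obtain ⟨L, x, R, rfl, rfl⟩ := h
  refine ⟨L.length, x, by simp, hA x (by simp), ?_, ?_, Or.inr ?_⟩
  · rw [List.take_left, List.drop_left]
  · rw [getD_mid]; exact Finset.inter_subset_right
  · rw [getD_mid]

lemma commute_ins_dup [DecidableEq V] {G : SimpleGraph V} {A B A' : List (Finset V)}
    (h1 : SubcliqueInsertion G A B) (h2 : Dup A A') :
    ∃ B', Dup B B' ∧ SubcliqueInsertion G A' B' := by
  obtain ⟨i, Q', hi, hQ, rfl, hint, hsub⟩ := h1
  obtain ⟨L, x, R, rfl, rfl⟩ := h2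
  rcases le_or_gt i L.length with hc | hc
  · -- insertion happens inside or at end of `L`
    have htake : (L ++ x :: R).take i = L.take i := List.take_append_of_le_length hc
    have hdrop : (L ++ x :: R).drop i = L.drop i ++ x :: R := List.drop_append_of_le_length hc
    have htake' : (L ++ x :: x :: R).take i = L.take i := List.take_append_of_le_length hc
    have hdrop' : (L ++ x :: x :: R).drop i = L.drop i ++ x :: x :: R :=
      List.drop_append_of_le_length hc
    refine ⟨(L.take i ++ Q' :: L.drop i) ++ x :: x :: R, ⟨_, x, R, ?_, rfl⟩, ?_⟩
    · rw [htake, hdrop]; simp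
    · refine ⟨i, Q', by simp; omega, hQ, ?_, ?_, ?_⟩
      · rw [htake', hdrop']; simp
      · rwa [getD_dup_le x (show i - 1 ≤ L.length by omega),
          getD_dup_le x (show i ≤ L.length by omega)]
      · rcases hsub with h | h
        · left; rwa [getD_dup_le x (show i - 1 ≤ L.length by omega)]
        · right; rwa [getD_dup_le x (show i ≤ L.length by omega)]
  · -- insertion happens strictly inside `x :: R`
    obtain ⟨k, rfl⟩ : ∃ k, i = L.length + 1 + k := ⟨i - L.length - 1, by omega⟩
    have hkR : k ≤ R.length := by simp at hi; omega
    have htake : (L ++ x :: R).take (L.length + 1 + k) = L ++ x :: R.take k := by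
      rw [List.take_append, List.take_of_length_le (by omega)]
      congr 1
      have : L.length + 1 + k - L.length = k + 1 := by omega
      rw [this]; rfl
    have hdrop : (L ++ x :: R).drop (L.length + 1 + k) = R.drop k := by
      rw [List.drop_append, List.drop_eq_nil_of_le (by omega)]
      have : L.length + 1 + k - L.length = k + 1 := by omega
      rw [this]; rfl
    have htake' : (L ++ x :: x :: R).take (L.length + 1 + k + 1) = L ++ x :: x :: R.take k := by
      rw [List.take_append, List.take_of_length_le (by omega)]
      congr 1
      have : L.length + 1 + k + 1 - L.length = k + 2 := by omega
      rw [this]; rfl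
    have hdrop' : (L ++ x :: x :: R).drop (L.length + 1 + k + 1) = R.drop k := by
      rw [List.drop_append, List.drop_eq_nil_of_le (by omega)]
      have : L.length + 1 + k + 1 - L.length = k + 2 := by omega
      rw [this]; rfl
    refine ⟨L ++ x :: x :: (R.take k ++ Q' :: R.drop k),
      ⟨L, x, R.take k ++ Q' :: R.drop k, by rw [htake, hdrop]; simp, rfl⟩, ?_⟩
    refine ⟨L.length + 1 + k + 1, Q', by simp at hi ⊢; omega, hQ, ?_, ?_, ?_⟩
    · rw [htake', hdrop']; simp
    · have e1 : (L ++ x :: x :: R).getD (L.length + 1 + k + 1 - 1) ∅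
          = (L ++ x :: R).getD (L.length + 1 + k - 1) ∅ := by
        have : L.length + 1 + k + 1 - 1 = (L.length + 1 + k - 1) + 1 := by omega
        rw [this]; exact getD_dup_shift x (by omega)
      have e2 : (L ++ x :: x :: R).getD (L.length + 1 + k + 1) ∅
          = (L ++ x :: R).getD (L.length + 1 + k) ∅ := getD_dup_shift x (by omega)
      rw [if_neg (by omega), e1, e2]
      rwa [if_neg (by omega)] at hint
    · have e1 : (L ++ x :: x :: R).getD (L.length + 1 + k + 1 - 1) ∅
          = (L ++ x :: R).getD (L.length + 1 + k - 1) ∅ := by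
        have : L.length + 1 + k + 1 - 1 = (L.length + 1 + k - 1) + 1 := by omega
        rw [this]; exact getD_dup_shift x (by omega)
      have e2 : (L ++ x :: x :: R).getD (L.length + 1 + k + 1) ∅
          = (L ++ x :: R).getD (L.length + 1 + k) ∅ := getD_dup_shift x (by omega)
      rw [if_neg (by omega), e1, e2]
      rwa [if_neg (by omega)] at hsub

lemma ext_dup [DecidableEq V] {G : SimpleGraph V} {A B : List (Finset V)}
    (h : IsExtension G A B) :
    ∀ A', Dup A A' → ∃ B', Dup B B' ∧ IsExtension G A' B' := by
  induction h using Relation.ReflTransGen.head_induction_on with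
  | refl => exact fun A' hA' => ⟨A', hA', Relation.ReflTransGen.refl⟩
  | head hins _ ih =>
    intro A' hA'
    obtain ⟨c', hc', hins'⟩ := commute_ins_dup hins hA'
    obtain ⟨B', hB', hext⟩ := ih c' hc'
    exact ⟨B', hB', hext.head hins'⟩

lemma ext_dups [DecidableEq V] {G : SimpleGraph V} {A A' : List (Finset V)}
    (h : Relation.ReflTransGen Dup A A') :
    ∀ B, IsExtension G A B →
      ∃ B', Relation.ReflTransGen Dup B B' ∧ IsExtension G A' B' := by
  induction h using Relation.ReflTransGen.head_induction_on with
  | refl => exact fun B hB => ⟨B, Relation.ReflTransGen.refl, hB⟩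
  | head hd _ ih =>
    intro B hB
    obtain ⟨B₁, hB₁, hext₁⟩ := ext_dup hB _ hd
    obtain ⟨B', hB', hext⟩ := ih B₁ hext₁
    exact ⟨B', hB'.head hB₁, hext⟩

lemma dups_cons {A B : List (Finset V)} (x : Finset V)
    (h : Relation.ReflTransGen Dup A B) :
    Relation.ReflTransGen Dup (x :: A) (x :: B) := by
  refine Relation.ReflTransGen.lift (x :: ·) ?_ _ _ h
  rintro a b ⟨L, y, R, rfl, rfl⟩
  exact ⟨x :: L, y, R, rfl, rfl⟩

lemma dups_destutter' [DecidableEq V] (l : List (Finset V)) :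
    ∀ a : Finset V, Relation.ReflTransGen Dup (List.destutter' (· ≠ ·) a l) (a :: l) := by
  induction l with
  | nil => exact fun a => Relation.ReflTransGen.refl
  | cons b t ih =>
    intro a
    rw [List.destutter']
    by_cases h : a ≠ b
    · rw [if_pos h]
      exact dups_cons a (ih b)
    · rw [if_neg h]
      push_neg at h
      subst h
      exact (ih a).tail ⟨[], a, t, rfl, rfl⟩

lemma dups_destutter [DecidableEq V] (l : List (Finset V)) :
    Relation.ReflTransGen Dup (l.destutter (· ≠ ·)) l := by
  cases l with
  | nil => exact Relation.ReflTransGen.refl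
  | cons a t => exact dups_destutter' t a

lemma dup_cliques {G : SimpleGraph V} {A B : List (Finset V)}
    (hA : ∀ Q ∈ A, G.IsClique (Q : Set V)) (h : Dup A B) :
    ∀ Q ∈ B, G.IsClique (Q : Set V) := by
  obtain ⟨L, x, R, rfl, rfl⟩ := h
  intro Q hQ
  apply hA
  simp at hQ ⊢
  tauto

lemma dups_ext [DecidableEq V] {G : SimpleGraph V} {A B : List (Finset V)}
    (h : Relation.ReflTransGen Dup A B) :
    (∀ Q ∈ A, G.IsClique (Q : Set V)) → IsExtension G A B := by
  induction h using Relation.ReflTransGen.head_induction_on with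
  | refl => exact fun _ => Relation.ReflTransGen.refl
  | head hd _ ih =>
    intro hA
    exact (ih (dup_cliques hA hd)).head (hd.insertion hA)

lemma ins_cliques [DecidableEq V] {G : SimpleGraph V} {A B : List (Finset V)}
    (h : SubcliqueInsertion G A B) (hA : ∀ Q ∈ A, G.IsClique (Q : Set V)) :
    ∀ Q ∈ B, G.IsClique (Q : Set V) := by
  obtain ⟨i, Q', _, hQ, rfl, -, -⟩ := h
  intro Q hQmem
  simp at hQmem
  rcases hQmem with h | h | h
  · exact hA Q (List.mem_of_mem_take h)
  · exact h ▸ hQ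
  · exact hA Q (List.mem_of_mem_drop h)

lemma ext_cliques [DecidableEq V] {G : SimpleGraph V} {A B : List (Finset V)}
    (h : IsExtension G A B) (hA : ∀ Q ∈ A, G.IsClique (Q : Set V)) :
    ∀ Q ∈ B, G.IsClique (Q : Set V) := by
  induction h with
  | refl => exact hA
  | tail _ hins ih => exact ins_cliques hins ih

/-- Eliminating all consecutive duplicates from a clique ordering yields an
equivalent ordering: it is compatible with exactly the same clique orderings. -/
theorem equivalent_of_destutter {V : Type*} [Fintype V] [DecidableEq V]
    (H : SimpleGraph V) (S : List (Finset V)) (hS : IsCliqueOrdering H S) :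
    ∀ S'' : List (Finset V), IsCliqueOrdering H S'' →
      (Compatible H S S'' ↔ Compatible H (S.destutter (· ≠ ·)) S'') := by
  intro S'' _
  have hScl : ∀ Q ∈ S, H.IsClique (Q : Set V) := hS.1
  have hD : Relation.ReflTransGen Dup (S.destutter (· ≠ ·)) S := dups_destutter S
  have hDcl : ∀ Q ∈ S.destutter (· ≠ ·), H.IsClique (Q : Set V) := fun Q hQ =>
    hScl Q ((List.destutter_sublist _ _).subset hQ)
  have hDS : IsExtension H (S.destutter (· ≠ ·)) S := dups_ext hD hDcl
  constructor
  · rintro ⟨T, h1, h2⟩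
    exact ⟨T, hDS.trans h1, h2⟩
  · rintro ⟨T, h1, h2⟩
    obtain ⟨T', hTT', hST'⟩ := ext_dups hD T h1
    have hTcl := ext_cliques h1 hDcl
    exact ⟨T', hST', h2.trans (dups_ext hTT' hTcl)⟩
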